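/- For any nonnegative integer A, the sum over n ≥ 0 of q^{n^2 + A n} / ((q)_n (q)_{n+A}) equals 1/(q)_∞, where (q)_∞ = ∏_{k≥1}(1-q^k). (Durfee rectangle identity.) -/

import Mathlib

open scoped BigOperators

noncomputable def qPoch (q : ℂ) (n : ℕ) : ℂ := ∏ k ∈ Finset.range n, (1 - q ^ (k + 1))

noncomputable def qPochInf (q : ℂ) : ℂ := ∏' k : ℕ, (1 - q ^ (k + 1))

section basic
variable {q : ℂ}

lemma norm_pow_lt (hq : ‖q‖ < 1) (k : ℕ) : ‖q ^ (k + 1)‖ < 1 := by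
  rw [norm_pow]
  calc ‖q‖ ^ (k+1) ≤ ‖q‖ ^ 1 := by
        apply pow_le_pow_of_le_one (norm_nonneg q) hq.le
        omega
    _ < 1 := by simpa using hq

lemma factor_ne_zero (hq : ‖q‖ < 1) (k : ℕ) : (1 : ℂ) - q ^ (k + 1) ≠ 0 := by
  intro h
  have h1 : (1 : ℂ) = q ^ (k+1) := by linear_combination h
  have h2 := norm_pow_lt hq k
  rw [← h1] at h2
  simp at h2

lemma qPoch_ne_zero (hq : ‖q‖ < 1) (n : ℕ) : qPoch q n ≠ 0 :=
  Finset.prod_ne_zero_iff.mpr fun k _ => factor_ne_zero hq k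

lemma qPoch_succ (n : ℕ) : qPoch q (n + 1) = qPoch q n * (1 - q ^ (n + 1)) :=
  Finset.prod_range_succ _ _

lemma qPoch_zero : qPoch q 0 = 1 := rfl

end basic

noncomputable def dT (q : ℂ) (M A n : ℕ) : ℂ :=
  q ^ (n ^ 2 + A * n) * qPoch q (M + A) / (qPoch q n * qPoch q (n + A) * qPoch q (M - n))

section finite
variable {q : ℂ}

lemma pascal1 (hq : ‖q‖ < 1) (M A n : ℕ) (hn : n ≤ M) :
    dT q (M+1) (A+1) n = dT q M (A+1) n + q^(M+1) * dT q (M+1) A n := by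
  obtain ⟨d, rfl⟩ : ∃ d, M = n + d := ⟨M - n, by omega⟩
  unfold dT
  have e1 : n + d + 1 - n = d + 1 := by omega
  have e2 : n + d - n = d := by omega
  have e3 : n + d + 1 + (A+1) = (n + d + A + 1) + 1 := by omega
  have e4 : n + d + 1 + A = n + d + A + 1 := by omega
  have e6 : n + (A+1) = (n+A) + 1 := by omega
  rw [e1, e2, e3, e4, e6, qPoch_succ (n+d+A+1), qPoch_succ d, qPoch_succ (n+A)]
  have ha := qPoch_ne_zero hq n
  have hb := qPoch_ne_zero hq (n+A)
  have hc := qPoch_ne_zero hq d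
  have hu1 := factor_ne_zero hq (n+A)
  have hu2 := factor_ne_zero hq d
  have hD1 : qPoch q n * (qPoch q (n+A) * (1 - q^(n+A+1))) * (qPoch q d * (1 - q^(d+1))) ≠ 0 :=
    mul_ne_zero (mul_ne_zero ha (mul_ne_zero hb hu1)) (mul_ne_zero hc hu2)
  have hD2 : qPoch q n * (qPoch q (n+A) * (1 - q^(n+A+1))) * qPoch q d ≠ 0 :=
    mul_ne_zero (mul_ne_zero ha (mul_ne_zero hb hu1)) hc
  have hD3 : qPoch q n * qPoch q (n+A) * (qPoch q d * (1 - q^(d+1))) ≠ 0 :=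
    mul_ne_zero (mul_ne_zero ha hb) (mul_ne_zero hc hu2)
  have e7 : n + d + (A+1) = n + d + A + 1 := by omega
  rw [e7, ← mul_div_assoc (q^(n+d+1)), div_add_div _ _ hD2 hD3,
    div_eq_div_iff hD1 (mul_ne_zero hD2 hD3)]
  ring

lemma pascal0 (hq : ‖q‖ < 1) (M m : ℕ) (hm : m < M) :
    dT q (M+1) 0 (m+1) = dT q M 0 (m+1) + q^(M+1) * dT q M 1 m / (1 - q^(M+1)) := by
  obtain ⟨d, rfl⟩ : ∃ d, M = m + d + 1 := ⟨M - m - 1, by omega⟩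
  unfold dT
  have e1 : m + d + 1 + 1 - (m + 1) = d + 1 := by omega
  have e2 : m + d + 1 - (m + 1) = d := by omega
  have e3 : m + d + 1 - m = d + 1 := by omega
  have e4 : m + d + 1 + 0 = m + d + 1 := by omega
  have e6 : m + 1 + 0 = m + 1 := by omega
  rw [e1, e2, e3, e4, e6, qPoch_succ (m+d+1), qPoch_succ (m+d), qPoch_succ d, qPoch_succ m]
  have ha := qPoch_ne_zero hq m
  have hc := qPoch_ne_zero hq d
  have he := qPoch_ne_zero hq (m+d)
  have hu1 := factor_ne_zero hq m
  have hu2 := factor_ne_zero hq d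
  have hu3 := factor_ne_zero hq (m+d)
  have hu4 := factor_ne_zero hq (m+d+1)
  set a := qPoch q m
  set c := qPoch q d
  set e := qPoch q (m+d)
  have hD1 : a * (1 - q^(m+1)) * (a * (1 - q^(m+1))) * (c * (1 - q^(d+1))) ≠ 0 :=
    mul_ne_zero (mul_ne_zero (mul_ne_zero ha hu1) (mul_ne_zero ha hu1)) (mul_ne_zero hc hu2)
  have hD2 : a * (1 - q^(m+1)) * (a * (1 - q^(m+1))) * c ≠ 0 :=
    mul_ne_zero (mul_ne_zero (mul_ne_zero ha hu1) (mul_ne_zero ha hu1)) hc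
  have hD3 : (a * (a * (1 - q^(m+1))) * (c * (1 - q^(d+1)))) * (1 - q^(m+d+1+1)) ≠ 0 :=
    mul_ne_zero (mul_ne_zero (mul_ne_zero ha (mul_ne_zero ha hu1)) (mul_ne_zero hc hu2)) hu4
  rw [← mul_div_assoc (q^(m+d+1+1)), div_div, div_add_div _ _ hD2 hD3,
    div_eq_div_iff hD1 (mul_ne_zero hD2 hD3)]
  ring
end finite

section key
variable {q : ℂ}

lemma dT_diag (hq : ‖q‖ < 1) (M A : ℕ) :
    dT q M A M = q ^ (M ^ 2 + A * M) / qPoch q M := by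
  unfold dT
  rw [Nat.sub_self, qPoch_zero]
  field_simp [qPoch_ne_zero hq]

lemma dT_zero0 (hq : ‖q‖ < 1) (M : ℕ) : dT q M 0 0 = 1 := by
  unfold dT
  simp [qPoch_zero, qPoch_ne_zero hq]

lemma key (hq : ‖q‖ < 1) : ∀ M A : ℕ,
    ∑ n ∈ Finset.range (M+1), dT q M A n = 1 / qPoch q M := by
  intro M
  induction M with
  | zero =>
    intro A
    simp only [Finset.sum_range_one, qPoch_zero]
    unfold dT
    simp [qPoch_zero, qPoch_ne_zero hq]
  | succ M ih =>
    intro A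
    have hPM := qPoch_ne_zero hq M
    have hu := factor_ne_zero hq M
    induction A with
    | zero =>
      rw [Finset.sum_range_succ, Finset.sum_range_succ']
      have hp : ∀ m ∈ Finset.range M,
          dT q (M+1) 0 (m+1) = dT q M 0 (m+1) + q^(M+1) * dT q M 1 m / (1 - q^(M+1)) := by
        intro m hm
        exact pascal0 hq M m (Finset.mem_range.mp hm)
      rw [Finset.sum_congr rfl hp, Finset.sum_add_distrib, dT_zero0 hq]
      have h1 : ∑ m ∈ Finset.range M, dT q M 0 (m+1) = 1 / qPoch q M - 1 := by
        have h0 := ih 0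
        rw [Finset.sum_range_succ' (dT q M 0) M, dT_zero0 hq] at h0
        linear_combination h0
      have h2 : ∑ m ∈ Finset.range M, q^(M+1) * dT q M 1 m / (1 - q^(M+1))
          = q^(M+1) * (1 / qPoch q M - q ^ (M^2 + 1*M) / qPoch q M) / (1 - q^(M+1)) := by
        rw [← Finset.sum_div, ← Finset.mul_sum]
        congr 2
        have h0 := ih 1
        rw [Finset.sum_range_succ, dT_diag hq] at h0
        linear_combination h0
      have h3 : dT q (M+1) 0 (M+1) = q^((M+1)^2 + 0*(M+1)) / (qPoch q M * (1 - q^(M+1))) := by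
        rw [dT_diag hq, qPoch_succ]
      rw [h1, h2, h3]
      rw [qPoch_succ]
      field_simp
      ring
    | succ A ihA =>
      rw [Finset.sum_range_succ]
      have hp : ∀ n ∈ Finset.range (M+1),
          dT q (M+1) (A+1) n = dT q M (A+1) n + q^(M+1) * dT q (M+1) A n := by
        intro n hn
        exact pascal1 hq M A n (by have := Finset.mem_range.mp hn; omega)
      rw [Finset.sum_congr rfl hp, Finset.sum_add_distrib, ← Finset.mul_sum, ih (A+1)]
      have h2 : ∑ n ∈ Finset.range (M+1), dT q (M+1) A n
          = 1 / qPoch q (M+1) - dT q (M+1) A (M+1) := by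
        have := ihA
        rw [Finset.sum_range_succ] at this
        linear_combination this
      rw [h2, dT_diag hq, dT_diag hq, qPoch_succ]
      field_simp
      ring
end key


open Filter Topology

section bounds
variable {q : ℂ}

lemma weier (s : Finset ℕ) (a : ℕ → ℝ) (h0 : ∀ i, 0 ≤ a i) (h1 : ∀ i, a i ≤ 1) :
    1 - ∑ i ∈ s, a i ≤ ∏ i ∈ s, (1 - a i) := by
  induction s using Finset.cons_induction with
  | empty => simp
  | cons j s hj ih =>
    rw [Finset.prod_cons, Finset.sum_cons]
    have hP0 : (0:ℝ) ≤ ∏ i ∈ s, (1 - a i) :=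
      Finset.prod_nonneg fun i _ => by linarith [h1 i]
    have hP1 : ∏ i ∈ s, (1 - a i) ≤ 1 :=
      Finset.prod_le_one (fun i _ => by linarith [h1 i]) (fun i _ => by linarith [h0 i])
    nlinarith [h0 j, h1 j]

lemma geom_partial (r : ℝ) (h0 : 0 ≤ r) (h1 : r < 1) (t : ℕ) :
    ∑ j ∈ Finset.range t, r ^ j ≤ (1 - r)⁻¹ := by
  have := Summable.sum_le_tsum (Finset.range t) (fun i _ => pow_nonneg h0 i)
    (summable_geometric_of_lt_one h0 h1)
  rwa [tsum_geometric_of_lt_one h0 h1] at this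

lemma qPoch_lower (hq : ‖q‖ < 1) : ∃ c : ℝ, 0 < c ∧ ∀ m, c ≤ ‖qPoch q m‖ := by
  set r := ‖q‖ with hr
  have hr0 : 0 ≤ r := norm_nonneg q
  have hfac0 : ∀ k : ℕ, 0 ≤ 1 - r ^ (k+1) := fun k => by
    have := pow_le_one₀ hr0 hq.le (n := k+1); linarith
  have hfacpos : ∀ k : ℕ, 0 < 1 - r ^ (k+1) := fun k => by
    have : r ^ (k+1) < 1 := pow_lt_one₀ hr0 hq (by omega); linarith
  set P : ℕ → ℝ := fun m => ∏ k ∈ Finset.range m, (1 - r ^ (k+1)) with hP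
  have hPpos : ∀ m, 0 < P m := fun m => Finset.prod_pos fun k _ => hfacpos k
  have htt : Tendsto (fun n : ℕ => r ^ n) atTop (𝓝 0) :=
    tendsto_pow_atTop_nhds_zero_of_lt_one hr0 hq
  have hhalf : (0:ℝ) < (1 - r)/2 * (1 - r) := by nlinarith
  obtain ⟨K, hK⟩ := eventually_atTop.mp (htt.eventually (eventually_lt_nhds hhalf))
  have hr1 : 0 < 1 - r := by linarith
  have htail : ∀ m, ∑ k ∈ Finset.Ico K m, r ^ (k+1) ≤ 1/2 := by
    intro m
    rw [Finset.sum_Ico_eq_sum_range]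
    have h1 : ∀ j ∈ Finset.range (m - K), r ^ (K + j + 1) = r ^ (K+1) * r ^ j := by
      intro j _; rw [← pow_add]; ring_nf
    rw [Finset.sum_congr rfl h1, ← Finset.mul_sum]
    have h2 : r ^ (K+1) * ∑ j ∈ Finset.range (m - K), r ^ j
        ≤ ((1-r)/2 * (1-r)) * (1-r)⁻¹ := by
      apply mul_le_mul (hK (K+1) (by omega)).le (geom_partial r hr0 hq _)
        (Finset.sum_nonneg fun i _ => pow_nonneg hr0 i) (by positivity)
    calc r ^ (K+1) * ∑ j ∈ Finset.range (m - K), r ^ j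
        ≤ ((1-r)/2 * (1-r)) * (1-r)⁻¹ := h2
      _ = (1-r)/2 := by field_simp
      _ ≤ 1/2 := by linarith
  refine ⟨P K * (1/2), mul_pos (hPpos K) (by norm_num), fun m => ?_⟩
  have hPm : P K * (1/2) ≤ P m := by
    rcases le_total m K with hmK | hKm
    · have : P m * ∏ k ∈ Finset.Ico m K, (1 - r ^ (k+1)) = P K :=
        Finset.prod_range_mul_prod_Ico _ hmK
      have hle1 : ∏ k ∈ Finset.Ico m K, (1 - r ^ (k+1)) ≤ 1 :=
        Finset.prod_le_one (fun k _ => hfac0 k) (fun k _ => by linarith [pow_nonneg hr0 (k+1)])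
      nlinarith [hPpos m, hPpos K]
    · have hsplit : P K * ∏ k ∈ Finset.Ico K m, (1 - r ^ (k+1)) = P m :=
        Finset.prod_range_mul_prod_Ico _ hKm
      have hw : 1 - ∑ k ∈ Finset.Ico K m, r ^ (k+1)
          ≤ ∏ k ∈ Finset.Ico K m, (1 - r ^ (k+1)) :=
        weier _ _ (fun k => pow_nonneg hr0 _) (fun k => pow_le_one₀ hr0 hq.le)
      have := htail m
      nlinarith [hPpos K]
  refine hPm.trans ?_
  have : P m ≤ ∏ k ∈ Finset.range m, ‖1 - q ^ (k+1)‖ := by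
    apply Finset.prod_le_prod (fun k _ => hfac0 k)
    intro k _
    have h := norm_sub_norm_le (1:ℂ) (q ^ (k+1))
    simpa [norm_pow] using h
  rwa [qPoch, norm_prod]

lemma qPoch_upper (hq : ‖q‖ < 1) (m : ℕ) :
    ‖qPoch q m‖ ≤ Real.exp ((1 - ‖q‖)⁻¹) := by
  set r := ‖q‖ with hr
  have hr0 : 0 ≤ r := norm_nonneg q
  rw [qPoch, norm_prod]
  have h1 : ∏ k ∈ Finset.range m, ‖1 - q ^ (k+1)‖
      ≤ ∏ k ∈ Finset.range m, Real.exp (r ^ (k+1)) := by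
    apply Finset.prod_le_prod (fun k _ => norm_nonneg _)
    intro k _
    calc ‖1 - q ^ (k+1)‖ ≤ ‖(1:ℂ)‖ + ‖q ^ (k+1)‖ := norm_sub_le _ _
      _ = r ^ (k+1) + 1 := by
          rw [norm_one, norm_pow]
          ring
      _ ≤ Real.exp (r ^ (k+1)) := Real.add_one_le_exp _
  refine h1.trans ?_
  rw [← Real.exp_sum]
  apply Real.exp_le_exp.mpr
  calc ∑ k ∈ Finset.range m, r ^ (k+1) ≤ ∑ k ∈ Finset.range m, r ^ k := by
        apply Finset.sum_le_sum
        intro k _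
        exact pow_le_pow_of_le_one hr0 hq.le (by omega)
    _ ≤ (1 - r)⁻¹ := geom_partial r hr0 hq m

end bounds

section prodlim
variable {q : ℂ}

lemma summable_log (hq : ‖q‖ < 1) :
    Summable (fun k : ℕ => Complex.log (1 - q ^ (k + 1))) := by
  set r := ‖q‖ with hr
  have hr0 : 0 ≤ r := norm_nonneg q
  have hs : Summable (fun k : ℕ => (3/2 : ℝ) * r ^ (k+1)) := by
    have := (summable_geometric_of_lt_one hr0 hq).mul_left ((3/2 : ℝ) * r)
    apply this.congr
    intro k
    rw [pow_succ']
    ring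
  apply Summable.of_norm_bounded_eventually_nat hs
  have htt : Tendsto (fun n : ℕ => r ^ n) atTop (𝓝 0) :=
    tendsto_pow_atTop_nhds_zero_of_lt_one hr0 hq
  have hev : ∀ᶠ k : ℕ in atTop, r ^ (k+1) ≤ 1/2 := by
    have h2 := htt.eventually (eventually_le_nhds (by norm_num : (0:ℝ) < 1/2))
    obtain ⟨K, hK⟩ := eventually_atTop.mp h2
    exact eventually_atTop.mpr ⟨K, fun k hk => hK (k+1) (by omega)⟩
  filter_upwards [hev] with k hk
  have h1 : (1 : ℂ) - q ^ (k+1) = 1 + (-(q ^ (k+1))) := by ring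
  rw [h1]
  have h2 : ‖(-(q ^ (k+1)) : ℂ)‖ ≤ 1/2 := by
    rw [norm_neg, norm_pow]; exact hk
  have := Complex.norm_log_one_add_half_le_self h2
  rw [norm_neg, norm_pow] at this
  exact this

lemma multipliable_qp (hq : ‖q‖ < 1) : Multipliable (fun k : ℕ => 1 - q ^ (k + 1)) :=
  Complex.multipliable_of_summable_log (summable_log hq)

lemma tendsto_qPoch (hq : ‖q‖ < 1) :
    Tendsto (fun m => qPoch q m) atTop (𝓝 (qPochInf q)) :=
  (multipliable_qp hq).hasProd.tendsto_prod_nat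

lemma qPochInf_ne_zero (hq : ‖q‖ < 1) : qPochInf q ≠ 0 := by
  obtain ⟨c, hc, hcle⟩ := qPoch_lower hq
  have h1 : Tendsto (fun m => ‖qPoch q m‖) atTop (𝓝 ‖qPochInf q‖) :=
    (tendsto_qPoch hq).norm
  have h2 : c ≤ ‖qPochInf q‖ := ge_of_tendsto' h1 hcle
  intro h
  rw [h] at h2
  simp at h2
  linarith
end prodlim


noncomputable def hseries (b : ℕ) (q : ℂ) : ℂ :=
  ∑' n : ℤ, (if Odd b then (-1 : ℂ) ^ n else if 0 ≤ n then 1 else -1) *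
    q ^ ((b : ℤ) * n * (n + 1) / 2 - n)

theorem durfee_rectangle (q : ℂ) (hq : ‖q‖ < 1) (A : ℕ) :
    ∑' n : ℕ, q ^ (n ^ 2 + A * n) / (qPoch q n * qPoch q (n + A)) = 1 / qPochInf q := by
  obtain ⟨c, hc, hcle⟩ := qPoch_lower hq
  have hr0 : (0:ℝ) ≤ ‖q‖ := norm_nonneg q
  set B := Real.exp ((1 - ‖q‖)⁻¹) with hB
  have hBpos : 0 < B := Real.exp_pos _
  set g : ℕ → ℕ → ℂ := fun M n => if n ≤ M then dT q M A n else 0 with hg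
  set t : ℕ → ℂ := fun n => q ^ (n ^ 2 + A * n) / (qPoch q n * qPoch q (n + A)) with ht
  have hg_sum : ∀ M, ∑' n, g M n = 1 / qPoch q M := by
    intro M
    rw [tsum_eq_sum (s := Finset.range (M+1)) (f := g M) (fun n hn => by
      simp only [hg]
      rw [if_neg (by have := Finset.mem_range.not.mp hn; omega)])]
    rw [← key hq M A]
    apply Finset.sum_congr rfl
    intro n hn
    simp only [hg]
    rw [if_pos (by have := Finset.mem_range.mp hn; omega)]
  have hbound : ∀ M n, ‖g M n‖ ≤ (B / c^3) * ‖q‖^n := by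
    intro M n
    by_cases hn : n ≤ M
    · simp only [hg, if_pos hn]
      unfold dT
      rw [norm_div, norm_mul, norm_mul, norm_mul, norm_pow]
      have hnum : ‖q‖^(n^2+A*n) * ‖qPoch q (M+A)‖ ≤ ‖q‖^n * B := by
        apply mul_le_mul _ (qPoch_upper hq (M+A)) (norm_nonneg _) (by positivity)
        apply pow_le_pow_of_le_one hr0 hq.le
        have h2 : n ≤ n^2 := Nat.le_self_pow two_ne_zero n
        omega
      have hden : c^3 ≤ ‖qPoch q n‖ * ‖qPoch q (n+A)‖ * ‖qPoch q (M-n)‖ := by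
        have h1 := mul_le_mul (mul_le_mul (hcle n) (hcle (n+A)) hc.le (norm_nonneg _))
          (hcle (M-n)) hc.le (by positivity)
        calc c^3 = c * c * c := by ring
          _ ≤ _ := h1
      calc ‖q‖^(n^2+A*n) * ‖qPoch q (M+A)‖ / (‖qPoch q n‖ * ‖qPoch q (n+A)‖ * ‖qPoch q (M-n)‖)
          ≤ (‖q‖^n * B) / c^3 :=
            div_le_div₀ (by positivity) hnum (by positivity) hden
        _ = (B / c^3) * ‖q‖^n := by ring
    · simp only [hg, if_neg hn, norm_zero]
      positivity
  have hlim : ∀ n, Filter.Tendsto (fun M => g M n) Filter.atTop (𝓝 (t n)) := by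
    intro n
    have hPn := qPoch_ne_zero hq n
    have hPnA := qPoch_ne_zero hq (n+A)
    have hinf := qPochInf_ne_zero hq
    have h1 : Filter.Tendsto (fun M => qPoch q (M + A)) Filter.atTop (𝓝 (qPochInf q)) :=
      (tendsto_qPoch hq).comp (Filter.tendsto_add_atTop_nat A)
    have h2 : Filter.Tendsto (fun M => qPoch q (M - n)) Filter.atTop (𝓝 (qPochInf q)) :=
      (tendsto_qPoch hq).comp (Filter.tendsto_sub_atTop_nat n)
    have h3 : Filter.Tendsto (fun M => dT q M A n) Filter.atTop
        (𝓝 (q^(n^2+A*n) * qPochInf q / (qPoch q n * qPoch q (n+A) * qPochInf q))) := by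
      unfold dT
      exact (tendsto_const_nhds.mul h1).div (tendsto_const_nhds.mul h2)
        (mul_ne_zero (mul_ne_zero hPn hPnA) hinf)
    have heq : q^(n^2+A*n) * qPochInf q / (qPoch q n * qPoch q (n+A) * qPochInf q) = t n :=
      mul_div_mul_right _ _ hinf
    rw [heq] at h3
    apply h3.congr'
    filter_upwards [Filter.eventually_ge_atTop n] with M hM
    simp only [hg]
    rw [if_pos hM]
  have hsum : Summable (fun n : ℕ => (B / c^3) * ‖q‖^n) :=
    (summable_geometric_of_lt_one hr0 hq).mul_left _
  have hmain := tendsto_tsum_of_dominated_convergence hsum hlim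
    (Filter.Eventually.of_forall hbound)
  have hmain' : Filter.Tendsto (fun M => 1 / qPoch q M) Filter.atTop (𝓝 (∑' n, t n)) :=
    hmain.congr (fun M => hg_sum M)
  have hfin : Filter.Tendsto (fun M => 1 / qPoch q M) Filter.atTop (𝓝 (1 / qPochInf q)) :=
    tendsto_const_nhds.div (tendsto_qPoch hq) (qPochInf_ne_zero hq)
  exact tendsto_nhds_unique hmain' hfin
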